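/- Let X and Y be bounded metric spaces and m, n cardinals with 1 < n ≤ #X and 1 < m ≤ #Y. Suppose the metric segment [X,Y] is extreme (2·d_GH(X,Y) = diam X = diam Y > 0) and: (1) there is a partition of X into n nonempty subsets D_X with α(D_X) > 0; (2) there is a covering of Y by m nonempty subsets C_Y with sup of their diameters < diam Y; (3) m ≤ n. Then the segment [X,Y] cannot be extended beyond Y: there is no metric space Z with d_GH(Y,Z) > 0 and d_GH(X,Y) + d_GH(Y,Z) = d_GH(X,Z) < ∞. -/

import Mathlib

open Metric Set
open scoped ENNReal

/-- A correspondence between `X` and `Y`: a relation whose projections are surjective. -/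
def IsCorrespondence {X Y : Type*} (R : Set (X × Y)) : Prop :=
  (∀ x : X, ∃ y : Y, (x, y) ∈ R) ∧ (∀ y : Y, ∃ x : X, (x, y) ∈ R)

/-- The distortion of a relation `R ⊆ X × Y`. -/
noncomputable def corrDistortion {X Y : Type*} [MetricSpace X] [MetricSpace Y]
    (R : Set (X × Y)) : ℝ≥0∞ :=
  ⨆ p ∈ R, ⨆ q ∈ R, ENNReal.ofReal |dist p.1 q.1 - dist p.2 q.2|

/-- The Gromov–Hausdorff distance between (arbitrary) metric spaces:
half the infimum of distortions of correspondences. -/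
noncomputable def ghDist (X Y : Type*) [MetricSpace X] [MetricSpace Y] : ℝ≥0∞ :=
  (⨅ (R : Set (X × Y)) (_ : IsCorrespondence R), corrDistortion R) / 2

section Helpers

variable {A B : Type*} [MetricSpace A] [MetricSpace B]

lemma dis_mem_le {R : Set (A × B)} {p q : A × B} (hp : p ∈ R) (hq : q ∈ R) :
    ENNReal.ofReal |dist p.1 q.1 - dist p.2 q.2| ≤ corrDistortion R :=
  le_iSup₂_of_le p hp (le_iSup₂_of_le q hq le_rfl)

lemma two_ghDist_eq (A B : Type*) [MetricSpace A] [MetricSpace B] :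
    2 * ghDist A B
      = ⨅ (R : Set (A × B)) (_ : IsCorrespondence R), corrDistortion R :=
  ENNReal.mul_div_cancel two_ne_zero ENNReal.ofNat_ne_top

lemma two_ghDist_le {R : Set (A × B)} (h : IsCorrespondence R) :
    2 * ghDist A B ≤ corrDistortion R := by
  rw [two_ghDist_eq]; exact iInf₂_le R h

lemma ediam_ne_top_of_corr (hA : Bornology.IsBounded (Set.univ : Set A))
    {R : Set (A × B)} (h : IsCorrespondence R) (htop : corrDistortion R ≠ ⊤) :
    EMetric.diam (Set.univ : Set B) ≠ ⊤ := by
  have hle : EMetric.diam (Set.univ : Set B)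
      ≤ ENNReal.ofReal (Metric.diam (Set.univ : Set A) + (corrDistortion R).toReal) := by
    apply EMetric.diam_le
    intro z _ z' _
    obtain ⟨x, hx⟩ := h.2 z
    obtain ⟨x', hx'⟩ := h.2 z'
    have h1 : |dist x x' - dist z z'| ≤ (corrDistortion R).toReal :=
      (ENNReal.ofReal_le_iff_le_toReal htop).mp (dis_mem_le hx hx')
    have h2 : dist x x' ≤ Metric.diam (Set.univ : Set A) :=
      Metric.dist_le_diam_of_mem hA (Set.mem_univ _) (Set.mem_univ _)
    rw [edist_dist]
    apply ENNReal.ofReal_le_ofReal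
    have := abs_le.mp h1
    linarith
  exact ne_top_of_le_ne_top ENNReal.ofReal_ne_top hle

lemma ofReal_diam_sub_le_dis (hA : Bornology.IsBounded (Set.univ : Set A))
    {R : Set (A × B)} (h : IsCorrespondence R) :
    ENNReal.ofReal (Metric.diam (Set.univ : Set B) - Metric.diam (Set.univ : Set A))
      ≤ corrDistortion R := by
  by_cases htop : corrDistortion R = ⊤
  · simp [htop]
  have hB : Metric.diam (Set.univ : Set B)
      ≤ Metric.diam (Set.univ : Set A) + (corrDistortion R).toReal := by
    apply Metric.diam_le_of_forall_dist_le
      (add_nonneg Metric.diam_nonneg ENNReal.toReal_nonneg)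
    intro z _ z' _
    obtain ⟨x, hx⟩ := h.2 z
    obtain ⟨x', hx'⟩ := h.2 z'
    have h1 : |dist x x' - dist z z'| ≤ (corrDistortion R).toReal :=
      (ENNReal.ofReal_le_iff_le_toReal htop).mp (dis_mem_le hx hx')
    have h2 : dist x x' ≤ Metric.diam (Set.univ : Set A) :=
      Metric.dist_le_diam_of_mem hA (Set.mem_univ _) (Set.mem_univ _)
    have := abs_le.mp h1
    linarith
  calc ENNReal.ofReal (Metric.diam (Set.univ : Set B) - Metric.diam (Set.univ : Set A))
      ≤ ENNReal.ofReal (corrDistortion R).toReal :=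
        ENNReal.ofReal_le_ofReal (by linarith [Metric.diam_nonneg (s := (Set.univ : Set A))])
    _ = corrDistortion R := ENNReal.ofReal_toReal htop

end Helpers

/-- non-extendability of extreme metric segments. The index types `I`, `J`
play the roles of the cardinals `n`, `m`; `a > 0` is a lower bound witnessing
`α(D_X) > 0`, and `b > 0` witnesses `sup_j diam C_j < diam Y`. Conclusion: the segment
`[X, Y]` cannot be extended beyond `Y`. -/
theorem stmt11 {X Y I J : Type u} [MetricSpace X] [MetricSpace Y] [Nonempty X] [Nonempty Y]
    (hXb : EMetric.diam (Set.univ : Set X) ≠ ⊤)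
    (hYb : EMetric.diam (Set.univ : Set Y) ≠ ⊤)
    (hext : 2 * ghDist X Y = ENNReal.ofReal (Metric.diam (Set.univ : Set X)))
    (hdiam : Metric.diam (Set.univ : Set X) = Metric.diam (Set.univ : Set Y))
    (hpos : 0 < Metric.diam (Set.univ : Set X))
    (hI1 : 1 < Cardinal.mk I) (hIX : Cardinal.mk I ≤ Cardinal.mk X)
    (hJ1 : 1 < Cardinal.mk J) (hJY : Cardinal.mk J ≤ Cardinal.mk Y)
    (hJI : Cardinal.mk J ≤ Cardinal.mk I)
    (D : I → Set X) (hDne : ∀ i, (D i).Nonempty) (hDcov : ⋃ i, D i = Set.univ)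
    (hDdisj : Pairwise (Function.onFun Disjoint D))
    (a : ℝ) (ha : 0 < a)
    (hα : ∀ i j, i ≠ j → ∀ x ∈ D i, ∀ y ∈ D j, a ≤ dist x y)
    (C : J → Set Y) (hCne : ∀ j, (C j).Nonempty) (hCcov : ⋃ j, C j = Set.univ)
    (b : ℝ) (hb : 0 < b)
    (hCd : ∀ j, Metric.diam (C j) ≤ Metric.diam (Set.univ : Set Y) - b) :
    ∀ (Z : Type v) [MetricSpace Z] [Nonempty Z],
      ¬ (0 < ghDist Y Z ∧ ghDist X Y + ghDist Y Z = ghDist X Z ∧ ghDist X Z ≠ ⊤) := by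
  intro Z _ _
  rintro ⟨hr, htri, hfin⟩
  have hXbd : Bornology.IsBounded (Set.univ : Set X) :=
    Metric.isBounded_iff_ediam_ne_top.mpr hXb
  have hYbd : Bornology.IsBounded (Set.univ : Set Y) :=
    Metric.isBounded_iff_ediam_ne_top.mpr hYb
  -- finiteness facts
  have hsum_ne : ghDist X Y + ghDist Y Z ≠ ⊤ := by rw [htri]; exact hfin
  have hr_ne : ghDist Y Z ≠ ⊤ := (ENNReal.add_ne_top.mp hsum_ne).2
  have h2r_ne : 2 * ghDist Y Z ≠ ⊤ := ENNReal.mul_ne_top ENNReal.ofNat_ne_top hr_ne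
  have h2fin : 2 * ghDist X Z ≠ ⊤ := ENNReal.mul_ne_top ENNReal.ofNat_ne_top hfin
  -- Z is bounded
  have hZb : EMetric.diam (Set.univ : Set Z) ≠ ⊤ := by
    have hlt : (⨅ (R : Set (X × Z)) (_ : IsCorrespondence R), corrDistortion R) < ⊤ := by
      rw [← two_ghDist_eq]; exact h2fin.lt_top
    obtain ⟨R0, hR0⟩ := iInf_lt_iff.mp hlt
    obtain ⟨hR0c, hR0top⟩ := iInf_lt_iff.mp hR0
    exact ediam_ne_top_of_corr hXbd hR0c hR0top.ne
  have hZbd : Bornology.IsBounded (Set.univ : Set Z) :=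
    Metric.isBounded_iff_ediam_ne_top.mpr hZb
  -- notation
  set Δ := Metric.diam (Set.univ : Set X) with hΔ
  set DZ := Metric.diam (Set.univ : Set Z) with hDZdef
  set t := (2 * ghDist Y Z).toReal with htdef
  have h2r_pos : 0 < 2 * ghDist Y Z := ENNReal.mul_pos two_ne_zero hr.ne'
  have ht : 0 < t := ENNReal.toReal_pos h2r_pos.ne' h2r_ne
  have h2r_eq : 2 * ghDist Y Z = ENNReal.ofReal t := (ENNReal.ofReal_toReal h2r_ne).symm
  -- triangle equality times two
  have htri2 : 2 * ghDist X Z = ENNReal.ofReal Δ + 2 * ghDist Y Z := by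
    rw [← htri, mul_add, hext]
  -- lower bound: ofReal (DZ - Δ) ≤ 2 d_GH(Y,Z)
  have hlow : ENNReal.ofReal (DZ - Δ) ≤ 2 * ghDist Y Z := by
    rw [two_ghDist_eq, hdiam]
    exact le_iInf₂ fun Q hQ => ofReal_diam_sub_le_dis hYbd hQ
  have hDZ_le : DZ - Δ ≤ t := (ENNReal.ofReal_le_iff_le_toReal h2r_ne).mp hlow
  -- upper bound via full correspondence
  have hunivc : IsCorrespondence (Set.univ : Set (X × Z)) :=
    ⟨fun _ => ⟨Classical.arbitrary Z, trivial⟩, fun _ => ⟨Classical.arbitrary X, trivial⟩⟩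
  have hup : 2 * ghDist X Z ≤ ENNReal.ofReal (max Δ DZ) := by
    refine le_trans (two_ghDist_le hunivc) ?_
    apply iSup₂_le; intro p _; apply iSup₂_le; intro q _
    apply ENNReal.ofReal_le_ofReal
    have h1 : dist p.1 q.1 ≤ Δ := Metric.dist_le_diam_of_mem hXbd trivial trivial
    have h2 : dist p.2 q.2 ≤ DZ := Metric.dist_le_diam_of_mem hZbd trivial trivial
    have h3 : (0:ℝ) ≤ dist p.1 q.1 := dist_nonneg
    have h4 : (0:ℝ) ≤ dist p.2 q.2 := dist_nonneg
    rw [abs_le]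
    constructor
    · linarith [le_max_right Δ DZ]
    · linarith [le_max_left Δ DZ]
  -- DZ = Δ + t
  have hDZ_ge : Δ + t ≤ max Δ DZ := by
    have h1 : ENNReal.ofReal (Δ + t) ≤ ENNReal.ofReal (max Δ DZ) := by
      rw [ENNReal.ofReal_add Metric.diam_nonneg ht.le, ← h2r_eq, ← htri2]
      exact hup
    exact (ENNReal.ofReal_le_ofReal_iff
      (le_max_of_le_left Metric.diam_nonneg)).mp h1
  have hDZ : DZ = Δ + t := by
    rcases le_total DZ Δ with h | h
    · rw [max_eq_left h] at hDZ_ge; linarith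
    · rw [max_eq_right h] at hDZ_ge; linarith
  have hXZ : 2 * ghDist X Z = ENNReal.ofReal DZ := by
    rw [htri2, h2r_eq, ← ENNReal.ofReal_add Metric.diam_nonneg ht.le, ← hDZ]
  -- choose a good correspondence Q between Y and Z
  set ε := min a (min b t) / 2 with hε
  have hεpos : 0 < ε := by
    have : 0 < min a (min b t) := lt_min ha (lt_min hb ht)
    linarith
  have hεb : ε ≤ b / 2 := by
    have h1 : min a (min b t) ≤ b := le_trans (min_le_right _ _) (min_le_left _ _)
    rw [hε]; linarith
  have hQex : (⨅ (R : Set (Y × Z)) (_ : IsCorrespondence R), corrDistortion R)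
      < ENNReal.ofReal (t + ε) := by
    rw [← two_ghDist_eq, h2r_eq]
    exact (ENNReal.ofReal_lt_ofReal_iff (by linarith)).mpr (by linarith)
  obtain ⟨Q, hQ⟩ := iInf_lt_iff.mp hQex
  obtain ⟨hQc, hQlt⟩ := iInf_lt_iff.mp hQ
  -- a surjection g : I → J
  haveI : Nontrivial J := Cardinal.one_lt_iff_nontrivial.mp hJ1
  obtain ⟨f⟩ := (Cardinal.le_def J I).mp hJI
  set g : I → J := Function.invFun f with hg
  have hgsurj : Function.Surjective g :=
    fun j => ⟨f j, Function.leftInverse_invFun f.injective j⟩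
  -- the glued correspondence between X and Z
  set S : Set (X × Z) := {p | ∃ i, p.1 ∈ D i ∧ ∃ y ∈ C (g i), (y, p.2) ∈ Q} with hS
  have hSc : IsCorrespondence S := by
    constructor
    · intro x
      have hx : x ∈ ⋃ i, D i := by rw [hDcov]; trivial
      obtain ⟨i, hi⟩ := mem_iUnion.mp hx
      obtain ⟨y, hy⟩ := hCne (g i)
      obtain ⟨z, hz⟩ := hQc.1 y
      exact ⟨z, i, hi, y, hy, hz⟩
    · intro z
      obtain ⟨y, hy⟩ := hQc.2 z
      have hy2 : y ∈ ⋃ j, C j := by rw [hCcov]; trivial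
      obtain ⟨j, hj⟩ := mem_iUnion.mp hy2
      obtain ⟨i, hi⟩ := hgsurj j
      obtain ⟨x, hx⟩ := hDne i
      exact ⟨x, i, hx, y, hi ▸ hj, hy⟩
  -- the positive gain
  set c := min a (min t (b - ε)) with hc
  have hcpos : 0 < c := lt_min ha (lt_min ht (by linarith))
  have hca : c ≤ a := min_le_left _ _
  have hct : c ≤ t := le_trans (min_le_right _ _) (min_le_left _ _)
  have hcb : c ≤ b - ε := le_trans (min_le_right _ _) (min_le_right _ _)
  -- distortion bound for S
  have hSd : corrDistortion S ≤ ENNReal.ofReal (DZ - c) := by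
    apply iSup₂_le; intro p hp; apply iSup₂_le; intro q hq
    obtain ⟨i, hpD, y, hyC, hyQ⟩ := hp
    obtain ⟨i', hqD, y', hyC', hyQ'⟩ := hq
    apply ENNReal.ofReal_le_ofReal
    have hyy' : |dist y y' - dist p.2 q.2| < t + ε := by
      have h1 : ENNReal.ofReal |dist y y' - dist p.2 q.2| ≤ corrDistortion Q :=
        dis_mem_le (p := (y, p.2)) (q := (y', q.2)) hyQ hyQ'
      exact (ENNReal.ofReal_lt_ofReal_iff (by linarith)).mp (lt_of_le_of_lt h1 hQlt)
    have hxX : dist p.1 q.1 ≤ Δ := Metric.dist_le_diam_of_mem hXbd trivial trivial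
    have hzZ : dist p.2 q.2 ≤ DZ := Metric.dist_le_diam_of_mem hZbd trivial trivial
    have h3 : (0:ℝ) ≤ dist p.1 q.1 := dist_nonneg
    have h4 : (0:ℝ) ≤ dist p.2 q.2 := dist_nonneg
    have habs := abs_le.mp hyy'.le
    rcases eq_or_ne i i' with rfl | hne
    · have hyd : dist y y' ≤ Metric.diam (Set.univ : Set Y) - b :=
        le_trans (Metric.dist_le_diam_of_mem (hYbd.subset (subset_univ _)) hyC hyC')
          (hCd (g i))
      rw [abs_le]
      constructor
      · linarith [hdiam]
      · linarith [hdiam]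
    · have haxx : a ≤ dist p.1 q.1 := hα i i' hne p.1 hpD q.1 hqD
      rw [abs_le]
      constructor
      · linarith
      · linarith
  -- contradiction
  have hfinal : 2 * ghDist X Z < 2 * ghDist X Z := by
    calc 2 * ghDist X Z ≤ corrDistortion S := two_ghDist_le hSc
      _ ≤ ENNReal.ofReal (DZ - c) := hSd
      _ < ENNReal.ofReal DZ :=
        (ENNReal.ofReal_lt_ofReal_iff (by linarith)).mpr (by linarith)
      _ = 2 * ghDist X Z := hXZ.symm
  exact absurd hfinal (lt_irrefl _)
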